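/- arXiv:1502.01508 — 10 statements merged into one kernel-verified Lean document; each statement's English description precedes it below -/
import Mathlib

section
/- A ring R is almost Armendariz if and only if, for every positive integer n, the ring T_n(R) of n×n upper triangular matrices over R is almost Armendariz. -/
/-- An element `a` of a ring `R` is *strongly nilpotent* if every sequence
`a₀ = a`, `aₙ₊₁ ∈ aₙ R aₙ` is eventually zero. -/
def IsStronglyNilpotent {R : Type*} [Ring R] (a : R) : Prop :=
  ∀ s : ℕ → R, s 0 = a → (∀ n : ℕ, ∃ r : R, s (n + 1) = s n * r * s n) → ∃ n : ℕ, s n = 0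

/-- The prime radical `P(R)` of a ring `R`: the intersection of all prime two-sided
ideals of `R`, equivalently the set of strongly nilpotent elements of `R`. -/
def primeRadical (R : Type*) [Ring R] : Set R :=
  {a : R | IsStronglyNilpotent a}

/-- A ring `R` is *almost Armendariz* if whenever `f, g ∈ R[x]` satisfy `f g = 0`, every
product of a coefficient of `f` with a coefficient of `g` lies in the prime radical `P(R)`. -/
def IsAlmostArmendariz (R : Type*) [Ring R] : Prop :=
  ∀ f g : Polynomial R, f * g = 0 → ∀ i j : ℕ, f.coeff i * g.coeff j ∈ primeRadical R

/-- `T_n(R)`: the ring of `n × n` upper triangular matrices over `R`, as a subring of the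
full matrix ring. -/
def upperTriangularSubring (R : Type*) [Ring R] (n : ℕ) :
    Subring (Matrix (Fin n) (Fin n) R) where
  carrier := {M | ∀ i j : Fin n, j < i → M i j = 0}
  zero_mem' := fun _ _ _ => rfl
  one_mem' := fun _ _ h => Matrix.one_apply_ne (ne_of_gt h)
  add_mem' := fun ha hb i j h => by
    simp only [Matrix.add_apply, ha i j h, hb i j h, add_zero]
  neg_mem' := fun ha i j h => by
    simp only [Matrix.neg_apply, ha i j h, neg_zero]
  mul_mem' := fun {a b} ha hb i j h => by
    rw [Matrix.mul_apply]
    apply Finset.sum_eq_zero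
    intro k _
    rcases le_or_gt k j with hk | hk
    · rw [ha i k (lt_of_le_of_lt hk h), zero_mul]
    · rw [hb k j hk, mul_zero]

/-!
Ring homs carry `f g = 0` along coefficientwise; apply this to the diagonal-entry homs
`T_n(R) → R` and to the scalar embedding `R → T_1(R)`. Injective ring homs reflect strong
nilpotence, giving `⇐`. For `⇒`, an upper triangular matrix with strongly nilpotent diagonal
is strongly nilpotent: along any sequence `s (m + 1) = s m * r * s m` the diagonal eventually
vanishes, after which each step at least doubles the number of vanishing superdiagonals, so
the sequence reaches `0`.
-/

open Filter

namespace IsStronglyNilpotent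

variable {R S : Type*} [Ring R] [Ring S]

lemma seq_eq_zero_of_le {s : ℕ → R} (hs : ∀ n, ∃ r, s (n + 1) = s n * r * s n) {N : ℕ}
    (hN : s N = 0) {m : ℕ} (hm : N ≤ m) : s m = 0 := by
  induction m, hm using Nat.le_induction with
  | base => exact hN
  | succ m _ ih =>
    obtain ⟨r, hr⟩ := hs m
    rw [hr, ih, zero_mul, zero_mul]

lemma eventually_map_seq_eq_zero (φ : R →+* S) {a : R} (ha : IsStronglyNilpotent (φ a))
    {s : ℕ → R} (hs0 : s 0 = a) (hs : ∀ n, ∃ r, s (n + 1) = s n * r * s n) :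
    ∀ᶠ m in atTop, φ (s m) = 0 := by
  have hφs : ∀ n, ∃ r, φ (s (n + 1)) = φ (s n) * r * φ (s n) := fun n => by
    obtain ⟨r, hr⟩ := hs n
    exact ⟨φ r, by rw [hr, map_mul, map_mul]⟩
  obtain ⟨N, hN⟩ := ha (fun m => φ (s m)) (by rw [hs0]) hφs
  exact eventually_atTop.2 ⟨N, fun m => seq_eq_zero_of_le (s := fun m => φ (s m)) hφs hN⟩

lemma of_injective (φ : R →+* S) (hφ : Function.Injective φ) {a : R}
    (ha : IsStronglyNilpotent (φ a)) : IsStronglyNilpotent a := fun s hs0 hs => by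
  obtain ⟨N, hN⟩ := (eventually_map_seq_eq_zero φ ha hs0 hs).exists
  exact ⟨N, hφ (by rw [hN, map_zero])⟩

end IsStronglyNilpotent

lemma IsAlmostArmendariz.of_injective {R S : Type*} [Ring R] [Ring S] (φ : R →+* S)
    (hφ : Function.Injective φ) (hS : IsAlmostArmendariz S) : IsAlmostArmendariz R := by
  intro f g hfg i j
  have hmap : f.map φ * g.map φ = 0 := by rw [← Polynomial.map_mul, hfg, Polynomial.map_zero]
  have hS' := hS _ _ hmap i j
  rw [Polynomial.coeff_map, Polynomial.coeff_map, ← map_mul] at hS'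
  exact IsStronglyNilpotent.of_injective φ hφ hS'

namespace Matrix

variable {R : Type*} [Ring R] {n : ℕ}

/-- `M` is supported on and above the `a`-th superdiagonal. -/
def VanishesBelow (a : ℕ) (M : Matrix (Fin n) (Fin n) R) : Prop :=
  ∀ i j : Fin n, (j : ℕ) < i + a → M i j = 0

lemma VanishesBelow.mono {a b : ℕ} {M : Matrix (Fin n) (Fin n) R} (hM : VanishesBelow a M)
    (hba : b ≤ a) : VanishesBelow b M :=
  fun i j hij => hM i j (by omega)

lemma VanishesBelow.mul {a b : ℕ} {A B : Matrix (Fin n) (Fin n) R} (hA : VanishesBelow a A)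
    (hB : VanishesBelow b B) : VanishesBelow (a + b) (A * B) := by
  intro i j hij
  refine (mul_apply ..).trans (Finset.sum_eq_zero fun k _ => ?_)
  rcases lt_or_ge (k : ℕ) (i + a) with hk | hk
  · rw [hA i k hk, zero_mul]
  · rw [hB k j (by omega), mul_zero]

lemma VanishesBelow.eq_zero {M : Matrix (Fin n) (Fin n) R} (hM : VanishesBelow n M) : M = 0 :=
  ext fun i j => hM i j (by omega)

lemma vanishesBelow_zero_iff {M : Matrix (Fin n) (Fin n) R} :
    VanishesBelow 0 M ↔ M ∈ upperTriangularSubring R n := by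
  simp only [VanishesBelow, add_zero, ← Fin.lt_def]
  rfl

lemma vanishesBelow_one_of_diag_eq_zero {M : Matrix (Fin n) (Fin n) R}
    (hM : M ∈ upperTriangularSubring R n) (hdiag : ∀ k, M k k = 0) : VanishesBelow 1 M := by
  intro i j hij
  rcases (Nat.lt_succ_iff.1 hij).lt_or_eq with hlt | heq
  · exact hM i j hlt
  · rw [Fin.ext heq, hdiag]

end Matrix

namespace upperTriangularSubring

open Matrix

variable {R : Type*} [Ring R] {n : ℕ}

lemma diag_mul (A B : upperTriangularSubring R n) (k : Fin n) :
    ((A * B : upperTriangularSubring R n) : Matrix (Fin n) (Fin n) R) k k =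
      (A : Matrix (Fin n) (Fin n) R) k k * (B : Matrix (Fin n) (Fin n) R) k k := by
  refine (mul_apply ..).trans (Finset.sum_eq_single k (fun j _ hj => ?_) (by simp))
  rcases lt_or_gt_of_ne hj with h | h
  · rw [A.2 k j h, zero_mul]
  · rw [B.2 j k h, mul_zero]

def diagHom (k : Fin n) : upperTriangularSubring R n →+* R where
  toFun M := (M : Matrix (Fin n) (Fin n) R) k k
  map_one' := one_apply_eq k
  map_mul' A B := diag_mul A B k
  map_zero' := rfl
  map_add' _ _ := rfl

variable (R n) in
def scalar : R →+* upperTriangularSubring R n :=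
  (Matrix.scalar (Fin n)).codRestrict _ fun a i j hij => by
    simp [Matrix.scalar_apply, diagonal_apply_ne _ hij.ne']

lemma scalar_injective (hn : 0 < n) : Function.Injective (scalar R n) := fun a b hab => by
  have : Nonempty (Fin n) := Fin.pos_iff_nonempty.1 hn
  exact Matrix.scalar_inj.1 (congrArg Subtype.val hab)

/-- Once the diagonal of `s` vanishes, each step `s (m + 1) = s m * r * s m` moves the support
of `s` up by at least one superdiagonal. -/
lemma seq_eq_zero_of_diag_eq_zero {s : ℕ → upperTriangularSubring R n}
    (hs : ∀ m, ∃ r, s (m + 1) = s m * r * s m) {N : ℕ}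
    (hN : ∀ m, N ≤ m → ∀ k, diagHom k (s m) = 0) : s (N + n) = 0 := by
  suffices hlevel : ∀ m, VanishesBelow (m + 1) (s (N + m) : Matrix (Fin n) (Fin n) R) from
    Subtype.ext ((hlevel n).mono n.le_succ).eq_zero
  intro m
  induction m with
  | zero => exact vanishesBelow_one_of_diag_eq_zero (s N).2 (hN N le_rfl)
  | succ m ih =>
    obtain ⟨r, hr⟩ := hs (N + m)
    rw [← add_assoc, hr]
    exact ((ih.mul (vanishesBelow_zero_iff.2 r.2)).mul ih).mono (by omega)

theorem isStronglyNilpotent_of_diag (M : upperTriangularSubring R n)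
    (hM : ∀ k, IsStronglyNilpotent (diagHom k M)) : IsStronglyNilpotent M := by
  intro s hs0 hs
  have hdiag : ∀ᶠ m in atTop, ∀ k, diagHom k (s m) = 0 :=
    eventually_all.2 fun k => (hM k).eventually_map_seq_eq_zero (diagHom k) hs0 hs
  obtain ⟨N, hN⟩ := eventually_atTop.1 hdiag
  exact ⟨N + n, seq_eq_zero_of_diag_eq_zero hs hN⟩

end upperTriangularSubring

open upperTriangularSubring in
theorem IsAlmostArmendariz.upperTriangularSubring {R : Type*} [Ring R]
    (hR : IsAlmostArmendariz R) (n : ℕ) : IsAlmostArmendariz (upperTriangularSubring R n) := by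
  intro F G hFG i j
  refine isStronglyNilpotent_of_diag _ fun k => ?_
  have hmap : F.map (diagHom k) * G.map (diagHom k) = 0 := by
    rw [← Polynomial.map_mul, hFG, Polynomial.map_zero]
  have hR' := hR _ _ hmap i j
  rwa [Polynomial.coeff_map, Polynomial.coeff_map, ← map_mul] at hR'

/-- A ring `R` is almost Armendariz if and only if, for every positive integer `n`, the ring
`T_n(R)` of `n × n` upper triangular matrices over `R` is almost Armendariz. -/
theorem almostArmendariz_iff_upperTriangular {R : Type*} [Ring R] :
    IsAlmostArmendariz R ↔
      ∀ n : ℕ, 0 < n → IsAlmostArmendariz (upperTriangularSubring R n) :=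
  ⟨fun hR n _ => hR.upperTriangularSubring n,
    fun h => (h 1 one_pos).of_injective _ (upperTriangularSubring.scalar_injective one_pos)⟩
end

section
/- Let R be a reduced ring and let S be the subring of T_n(R) consisting of all n×n upper triangular matrices over R whose diagonal entries are all equal (i.e., matrices of the form a·I_n plus a strictly upper triangular matrix, with a ∈ R). Then S is almost Armendariz. -/
/-- The subring `S` of `T_n(R)` consisting of all upper triangular `n × n` matrices whose
diagonal entries are all equal. -/
def constDiagUpperTriangularSubring (R : Type*) [Ring R] (n : ℕ) :
    Subring (Matrix (Fin n) (Fin n) R) where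
  carrier := {M | (∀ i j : Fin n, j < i → M i j = 0) ∧ ∀ i j : Fin n, M i i = M j j}
  zero_mem' := ⟨fun _ _ _ => rfl, fun _ _ => rfl⟩
  one_mem' := ⟨fun _ _ h => Matrix.one_apply_ne (ne_of_gt h),
    fun i j => by rw [Matrix.one_apply_eq, Matrix.one_apply_eq]⟩
  add_mem' := fun ha hb => ⟨fun i j h => by
      simp only [Matrix.add_apply, ha.1 i j h, hb.1 i j h, add_zero],
    fun i j => by simp only [Matrix.add_apply, ha.2 i j, hb.2 i j]⟩
  neg_mem' := fun ha => ⟨fun i j h => by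
      simp only [Matrix.neg_apply, ha.1 i j h, neg_zero],
    fun i j => by simp only [Matrix.neg_apply, ha.2 i j]⟩
  mul_mem' := fun {a b} ha hb => by
    have hdiag : ∀ i : Fin n, (a * b) i i = a i i * b i i := by
      intro i
      rw [Matrix.mul_apply, Finset.sum_eq_single i]
      · intro k _ hk
        rcases lt_or_gt_of_ne hk with hlt | hgt
        · rw [ha.1 i k hlt, zero_mul]
        · rw [hb.1 k i hgt, mul_zero]
      · intro h; exact absurd (Finset.mem_univ i) h
    refine ⟨fun i j h => ?_, fun i j => ?_⟩
    · rw [Matrix.mul_apply]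
      apply Finset.sum_eq_zero
      intro k _
      rcases le_or_gt k j with hk | hk
      · rw [ha.1 i k (lt_of_le_of_lt hk h), zero_mul]
      · rw [hb.1 k j hk, mul_zero]
    · rw [hdiag i, hdiag j, ha.2 i j, hb.2 i j]

/-!
Reduced rings are Armendariz: if `f g = 0` in `R[x]` then every `aᵢ bⱼ = 0`. For a ring `S` of
upper triangular matrices over a reduced ring, each diagonal entry `M ↦ M k k` is a ring
hom `S → R`, so a product `aᵢ bⱼ` of coefficients of `f, g ∈ S[x]` with `f g = 0` has zero
diagonal. Such a strictly upper triangular `a` is strongly nilpotent in `S`: in a sequence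
`sₖ₊₁ = sₖ r sₖ` the entries of `sₖ` vanish below the `(k + 1)`-st superdiagonal.
-/

namespace IsReduced

variable {M₀ : Type*} [MonoidWithZero M₀] [IsReduced M₀] {a b : M₀}

theorem mul_eq_zero_swap (h : a * b = 0) : b * a = 0 :=
  eq_zero_of_pow_eq_zero (n := 2) <| by
    rw [sq, mul_assoc, ← mul_assoc a, h, zero_mul, mul_zero]

theorem mul_mul_eq_zero (h : a * b = 0) (r : M₀) : a * r * b = 0 :=
  eq_zero_of_pow_eq_zero (n := 2) <| by
    rw [sq, show a * r * b * (a * r * b) = a * r * (b * a) * (r * b) by simp only [mul_assoc],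
      mul_eq_zero_swap h, mul_zero, zero_mul]

theorem mul_eq_zero_of_mul_mul_self_eq_zero (h : a * b * b = 0) : a * b = 0 :=
  eq_zero_of_pow_eq_zero (n := 2) <| by
    rw [sq, mul_assoc, mul_eq_zero_swap h, mul_zero]

end IsReduced

namespace Polynomial

variable {R : Type*} [Semiring R] [IsReduced R] {f g : R[X]}

theorem coeff_mul_coeff_eq_zero_of_forall_lt {i j : ℕ} (hij : (f * g).coeff (i + j) = 0)
    (hlow : ∀ p q, p + q < i + j → f.coeff p * g.coeff q = 0)
    (hprev : ∀ p q, p + q = i + j → q < j → f.coeff p * g.coeff q = 0) :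
    f.coeff i * g.coeff j = 0 := by
  -- In `(∑_{p+q=i+j} aₚ b_q) bⱼ = 0` the terms with `q < j` vanish by `hprev`, those with `q > j`
  -- because `aₚ bⱼ = 0` by `hlow`; what remains is `aᵢ bⱼ bⱼ = 0`.
  rw [coeff_mul] at hij
  have hsum := congrArg (· * g.coeff j) hij
  simp only [Finset.sum_mul, zero_mul] at hsum
  rw [Finset.sum_eq_single (i, j)] at hsum
  · exact IsReduced.mul_eq_zero_of_mul_mul_self_eq_zero hsum
  · rintro ⟨p, q⟩ hpq hne
    rw [Finset.HasAntidiagonal.mem_antidiagonal] at hpq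
    rcases lt_trichotomy q j with hq | rfl | hq
    · rw [hprev p q hpq hq, zero_mul]
    · exact absurd (by rw [Prod.mk.injEq]; omega) hne
    · exact IsReduced.mul_mul_eq_zero (hlow p j (by omega)) _
  · exact fun h => (h (Finset.HasAntidiagonal.mem_antidiagonal.mpr rfl)).elim

theorem coeff_mul_coeff_eq_zero_of_mul_eq_zero (h : f * g = 0) (i j : ℕ) :
    f.coeff i * g.coeff j = 0 :=
  coeff_mul_coeff_eq_zero_of_forall_lt (by rw [h, coeff_zero])
    (fun p q _ => coeff_mul_coeff_eq_zero_of_mul_eq_zero h p q)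
    (fun p q _ _ => coeff_mul_coeff_eq_zero_of_mul_eq_zero h p q)
termination_by (i + j, j)
decreasing_by all_goals rw [Prod.lex_def]; omega

end Polynomial

namespace Matrix

section Superdiag

variable {R : Type*} {n : ℕ}

def VanishesBelowSuperdiag [Zero R] (d : ℕ) (M : Matrix (Fin n) (Fin n) R) : Prop :=
  ∀ i j : Fin n, (j : ℕ) < i + d → M i j = 0

variable {d e : ℕ} {M N : Matrix (Fin n) (Fin n) R}

theorem VanishesBelowSuperdiag.mono [Zero R] (h : VanishesBelowSuperdiag d M) (hed : e ≤ d) :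
    VanishesBelowSuperdiag e M :=
  fun i j hij => h i j (by omega)

theorem VanishesBelowSuperdiag.mul [NonUnitalNonAssocSemiring R]
    (hM : VanishesBelowSuperdiag d M) (hN : VanishesBelowSuperdiag e N) :
    VanishesBelowSuperdiag (d + e) (M * N) := by
  intro i j hij
  rw [mul_apply]
  refine Finset.sum_eq_zero fun k _ => ?_
  rcases lt_or_ge (k : ℕ) (i + d) with hk | hk
  · exact mul_eq_zero_of_left (hM i k hk) _
  · exact mul_eq_zero_of_right _ (hN k j (by omega))

theorem VanishesBelowSuperdiag.eq_zero [Zero R] (h : VanishesBelowSuperdiag d M) (hnd : n ≤ d) :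
    M = 0 :=
  ext fun i j => h i j (by omega)

theorem vanishesBelowSuperdiag_zero_iff [Zero R] :
    VanishesBelowSuperdiag 0 M ↔ M.IsUpperTriangular :=
  ⟨fun h _ _ hij => h _ _ hij, fun h _ _ hij => h hij⟩

theorem vanishesBelowSuperdiag_one_iff [Zero R] :
    VanishesBelowSuperdiag 1 M ↔ M.IsUpperTriangular ∧ ∀ i, M i i = 0 := by
  refine ⟨fun h => ⟨fun i j hij => h i j (Nat.lt_succ_of_lt hij),
    fun i => h i i (Nat.lt_succ_self _)⟩, ?_⟩
  rintro ⟨hM, hdiag⟩ i j hij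
  rcases Nat.lt_succ_iff_lt_or_eq.mp hij with hlt | heq
  · exact hM hlt
  · rw [Fin.ext heq]
    exact hdiag i

end Superdiag

theorem IsUpperTriangular.mul_apply_self {m R : Type*} [LinearOrder m] [Fintype m]
    [NonUnitalNonAssocSemiring R] {M N : Matrix m m R} (hM : M.IsUpperTriangular)
    (hN : N.IsUpperTriangular) (i : m) : (M * N) i i = M i i * N i i := by
  refine Finset.sum_eq_single i (fun k _ hk => ?_) (fun h => (h (Finset.mem_univ i)).elim)
  rcases lt_or_gt_of_ne hk with hlt | hgt
  · exact mul_eq_zero_of_left (hM hlt) _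
  · exact mul_eq_zero_of_right _ (hN hgt)

end Matrix

section UpperTriangularSubring

variable {R : Type*} [Ring R] {n : ℕ} {S : Subring (Matrix (Fin n) (Fin n) R)}

def Subring.diagEntryHom (hS : ∀ M ∈ S, M.IsUpperTriangular) (i : Fin n) : S →+* R where
  toFun M := (M : Matrix (Fin n) (Fin n) R) i i
  map_one' := Matrix.one_apply_eq i
  map_mul' M N := (hS M M.2).mul_apply_self (hS N N.2) i
  map_zero' := rfl
  map_add' _ _ := rfl

theorem isStronglyNilpotent_of_vanishesBelowSuperdiag_one (hS : ∀ M ∈ S, M.IsUpperTriangular)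
    {a : S} (ha : (a : Matrix (Fin n) (Fin n) R).VanishesBelowSuperdiag 1) :
    IsStronglyNilpotent a := by
  intro s hs0 hs
  have hband : ∀ k, (s k : Matrix (Fin n) (Fin n) R).VanishesBelowSuperdiag (k + 1) := by
    intro k
    induction k with
    | zero => rwa [hs0]
    | succ k ih =>
      obtain ⟨r, hr⟩ := hs k
      have hr0 := Matrix.vanishesBelowSuperdiag_zero_iff.mpr (hS r r.2)
      rw [hr]
      exact ((ih.mul hr0).mul ih).mono (by omega)
  exact ⟨n, Subtype.ext ((hband n).eq_zero (by omega))⟩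

theorem isAlmostArmendariz_of_forall_isUpperTriangular [IsReduced R]
    (hS : ∀ M ∈ S, M.IsUpperTriangular) : IsAlmostArmendariz S := by
  intro f g hfg i j
  refine isStronglyNilpotent_of_vanishesBelowSuperdiag_one hS
    (Matrix.vanishesBelowSuperdiag_one_iff.mpr ⟨hS _ (f.coeff i * g.coeff j).2, fun k => ?_⟩)
  have hmap : f.map (Subring.diagEntryHom hS k) * g.map (Subring.diagEntryHom hS k) = 0 := by
    rw [← Polynomial.map_mul, hfg, Polynomial.map_zero]
  have hcoeff := Polynomial.coeff_mul_coeff_eq_zero_of_mul_eq_zero hmap i j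
  rw [Polynomial.coeff_map, Polynomial.coeff_map] at hcoeff
  exact (map_mul (Subring.diagEntryHom hS k) _ _).trans hcoeff

end UpperTriangularSubring

/-- Let `R` be a reduced ring.  Then the ring `S` of upper triangular `n × n` matrices over `R`
with constant diagonal is almost Armendariz. -/
theorem constDiagUpperTriangular_almostArmendariz {R : Type*} [Ring R] [IsReduced R] (n : ℕ) :
    IsAlmostArmendariz (constDiagUpperTriangularSubring R n) :=
  isAlmostArmendariz_of_forall_isUpperTriangular fun _ hM => hM.1
end

section
/- For any ring R and any integer n ≥ 2, R is almost Armendariz if and only if the quotient ring R[x]/⟨xⁿ⟩ is almost Armendariz. -/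
/-!
The constant coefficient `ε : R[x]/⟨xⁿ⟩ → R` and the inclusion `R → R[x]/⟨xⁿ⟩` are ring
homomorphisms whose kernels consist of strongly nilpotent elements: the kernel of `ε` is
generated by the central nilpotent class of `x`, and the inclusion is injective. Being almost
Armendariz is pulled back along any ring homomorphism with such a kernel, because a strong
nilpotence sequence of `a` is mapped to one of `f a`, and once its image vanishes it has entered
the kernel.
-/

open Polynomial

section StronglyNilpotent

variable {A B : Type*} [Ring A] [Ring B]

theorem isStronglyNilpotent_zero : IsStronglyNilpotent (0 : A) :=
  fun _ hs0 _ => ⟨0, hs0⟩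

theorem IsStronglyNilpotent.of_map (f : A →+* B)
    (hker : ∀ x, f x = 0 → IsStronglyNilpotent x) {a : A} (ha : IsStronglyNilpotent (f a)) :
    IsStronglyNilpotent a := by
  intro s hs0 hstep
  obtain ⟨N, hN⟩ := ha (f ∘ s) (by simp [hs0]) fun k => by
    obtain ⟨r, hr⟩ := hstep k
    exact ⟨f r, by simp [hr]⟩
  obtain ⟨M, hM⟩ := hker (s N) hN (fun k => s (N + k)) rfl fun k => hstep (N + k)
  exact ⟨N + M, hM⟩

theorem IsNilpotent.isStronglyNilpotent_mul {c : A} (hc : IsNilpotent c)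
    (hcentral : ∀ x, Commute c x) (b : A) : IsStronglyNilpotent (c * b) := by
  intro s hs0 hstep
  have hdvd : ∀ k, ∃ y, s k = c ^ 2 ^ k * y := by
    intro k
    induction k with
    | zero => exact ⟨b, by simp [hs0]⟩
    | succ k ih =>
      obtain ⟨y, hy⟩ := ih
      obtain ⟨r, hr⟩ := hstep k
      refine ⟨y * r * y, ?_⟩
      have hcomm : c ^ 2 ^ k * (y * r) = y * r * c ^ 2 ^ k := ((hcentral _).pow_left _).eq
      calc s (k + 1) = c ^ 2 ^ k * (y * r * c ^ 2 ^ k) * y := by simp only [hr, hy, mul_assoc]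
        _ = c ^ 2 ^ (k + 1) * (y * r * y) := by
          rw [← hcomm, _root_.pow_succ, pow_mul, sq]
          simp only [mul_assoc]
  obtain ⟨m, hm⟩ := hc
  obtain ⟨y, hy⟩ := hdvd m
  exact ⟨m, by rw [hy, pow_eq_zero_of_le (Nat.lt_two_pow_self).le hm, zero_mul]⟩

theorem IsAlmostArmendariz.of_ringHom (hB : IsAlmostArmendariz B) (f : A →+* B)
    (hker : ∀ x, f x = 0 → IsStronglyNilpotent x) : IsAlmostArmendariz A := by
  intro F G hFG i j
  have hmap : F.map f * G.map f = 0 := by rw [← Polynomial.map_mul, hFG, Polynomial.map_zero]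
  have := hB _ _ hmap i j
  rw [coeff_map, coeff_map, ← map_mul] at this
  exact this.of_map f hker

theorem IsAlmostArmendariz.of_injective_s6 (hB : IsAlmostArmendariz B) (f : A →+* B)
    (hf : Function.Injective f) : IsAlmostArmendariz A :=
  hB.of_ringHom f fun x hx =>
    (injective_iff_map_eq_zero f).mp hf x hx ▸ isStronglyNilpotent_zero

end StronglyNilpotent

/-- `R[x]/⟨xⁿ⟩`. -/
abbrev TruncatedPolynomial (R : Type*) [Ring R] (n : ℕ) : Type _ :=
  RingQuot (fun p q : R[X] => p = X ^ n ∧ q = 0)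

namespace TruncatedPolynomial

variable {R : Type*} [Ring R] {n : ℕ}

noncomputable abbrev mk : R[X] →+* TruncatedPolynomial R n :=
  RingQuot.mkRingHom _

theorem mk_surjective : Function.Surjective (mk : R[X] → TruncatedPolynomial R n) :=
  RingQuot.mkRingHom_surjective _

theorem mk_X_pow : (mk (X ^ n) : TruncatedPolynomial R n) = 0 := by
  rw [RingQuot.mkRingHom_rel ⟨rfl, rfl⟩, map_zero]

theorem commute_mk_X (y : TruncatedPolynomial R n) : Commute (mk X) y := by
  obtain ⟨q, rfl⟩ := mk_surjective y
  exact (commute_X q).map mk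

theorem isNilpotent_mk_X : IsNilpotent (mk X : TruncatedPolynomial R n) :=
  ⟨n, by rw [← map_pow, mk_X_pow]⟩

noncomputable def constantCoeff (hn : n ≠ 0) : TruncatedPolynomial R n →+* R :=
  RingQuot.lift ⟨Polynomial.constantCoeff, by
    rintro _ _ ⟨rfl, rfl⟩
    simp [coeff_X_pow, hn.symm]⟩

theorem constantCoeff_mk (hn : n ≠ 0) (p : R[X]) : constantCoeff hn (mk p) = p.coeff 0 :=
  RingQuot.lift_mkRingHom_apply _ _ p

theorem injective_mk_comp_C (hn : n ≠ 0) :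
    Function.Injective ((mk : R[X] →+* TruncatedPolynomial R n).comp C) :=
  Function.LeftInverse.injective (g := constantCoeff hn) fun a => by
    simp [constantCoeff_mk]

theorem exists_eq_mk_X_mul_of_constantCoeff_eq_zero (hn : n ≠ 0) {x : TruncatedPolynomial R n}
    (hx : constantCoeff hn x = 0) : ∃ y, x = mk X * y := by
  obtain ⟨p, rfl⟩ := mk_surjective x
  obtain ⟨q, rfl⟩ := X_dvd_iff.mpr ((constantCoeff_mk hn p).symm.trans hx)
  exact ⟨mk q, map_mul _ _ _⟩

theorem isStronglyNilpotent_of_constantCoeff_eq_zero (hn : n ≠ 0) {x : TruncatedPolynomial R n}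
    (hx : constantCoeff hn x = 0) : IsStronglyNilpotent x := by
  obtain ⟨y, rfl⟩ := exists_eq_mk_X_mul_of_constantCoeff_eq_zero hn hx
  exact isNilpotent_mk_X.isStronglyNilpotent_mul commute_mk_X y

end TruncatedPolynomial

/-- For any ring `R` and any `n ≥ 2`, `R` is almost Armendariz if and only if the quotient
`R[x]/⟨xⁿ⟩` of `R[x]` by the two-sided ideal generated by `xⁿ` is almost Armendariz.  Here the
quotient is realized as the quotient of `R[x]` by the ring congruence generated by
the relation identifying `xⁿ` with `0`. -/
theorem almostArmendariz_iff_quotient_X_pow {R : Type*} [Ring R] (n : ℕ) (hn : 2 ≤ n) :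
    IsAlmostArmendariz R ↔
      IsAlmostArmendariz
        (RingQuot (fun p q : Polynomial R => p = Polynomial.X ^ n ∧ q = 0)) := by
  have hn0 : n ≠ 0 := by omega
  constructor
  · intro hR
    exact hR.of_ringHom (TruncatedPolynomial.constantCoeff hn0) fun _ =>
      TruncatedPolynomial.isStronglyNilpotent_of_constantCoeff_eq_zero hn0
  · intro hS
    exact hS.of_injective_s6 _ (TruncatedPolynomial.injective_mk_comp_C hn0)
end

section
/- Let R be a ring and I a two-sided ideal of R with I ⊆ P(R). If the quotient ring R/I is almost Armendariz, then R is almost Armendariz. -/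
section

variable {R S : Type*} [Ring R] [Ring S] (φ : R →+* S)

theorem IsStronglyNilpotent.of_map_s9 (hφ : (TwoSidedIdeal.ker φ : Set R) ⊆ primeRadical R)
    {a : R} (ha : IsStronglyNilpotent (φ a)) : IsStronglyNilpotent a := by
  intro s hs0 hs
  obtain ⟨n, hn⟩ : ∃ n, φ (s n) = 0 :=
    ha (φ ∘ s) (by simp [hs0]) fun k => by
      obtain ⟨r, hr⟩ := hs k
      exact ⟨φ r, by simp [hr]⟩
  have hsn : IsStronglyNilpotent (s n) := hφ ((TwoSidedIdeal.mem_ker φ).mpr hn)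
  obtain ⟨m, hm⟩ := hsn (fun k => s (n + k)) rfl fun k => hs (n + k)
  exact ⟨n + m, hm⟩

theorem IsAlmostArmendariz.of_ringHom_s9 (hφ : (TwoSidedIdeal.ker φ : Set R) ⊆ primeRadical R)
    (hS : IsAlmostArmendariz S) : IsAlmostArmendariz R := by
  intro f g hfg i j
  have hmap : f.map φ * g.map φ = 0 := by rw [← Polynomial.map_mul, hfg, Polynomial.map_zero]
  have hcoeff := hS _ _ hmap i j
  rw [Polynomial.coeff_map, Polynomial.coeff_map, ← map_mul] at hcoeff
  exact IsStronglyNilpotent.of_map_s9 φ hφ hcoeff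

end

/-- Let `I` be a two-sided ideal of `R` with `I ⊆ P(R)`.  If the quotient ring `R/I` is
almost Armendariz, then `R` is almost Armendariz. -/
theorem almostArmendariz_of_quotient_of_le_primeRadical {R : Type*} [Ring R]
    (I : TwoSidedIdeal R) (hI : (I : Set R) ⊆ primeRadical R)
    (h : IsAlmostArmendariz I.ringCon.Quotient) : IsAlmostArmendariz R :=
  h.of_ringHom_s9 I.ringCon.mk' (by rwa [TwoSidedIdeal.ker_ringCon_mk'])
end

section
/- Let R be a ring and e a central idempotent of R. Then R is almost Armendariz if and only if both corner rings eR and (1−e)R are almost Armendariz. -/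
/-- The corner `eR = {e * r : r ∈ R}` as a non-unital subring of `R`. -/
def cornerNonUnitalSubring {R : Type*} [Ring R] (e : R) : NonUnitalSubring R where
  carrier := {x : R | ∃ r : R, x = e * r}
  zero_mem' := ⟨0, (mul_zero e).symm⟩
  add_mem' := by
    rintro x y ⟨r, hr⟩ ⟨s, hs⟩
    exact ⟨r + s, by rw [hr, hs, mul_add]⟩
  neg_mem' := by
    rintro x ⟨r, hr⟩
    exact ⟨-r, by rw [hr, mul_neg]⟩
  mul_mem' := by
    rintro x y ⟨r, hr⟩ -
    exact ⟨r * y, by rw [hr, mul_assoc]⟩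

/-- For a central idempotent `e`, the corner `eR` is a ring with identity `e`. -/
def cornerRing {R : Type*} [Ring R] (e : R) (he : e * e = e) (hc : ∀ r : R, e * r = r * e) :
    Ring (cornerNonUnitalSubring e) :=
  { (inferInstance : NonUnitalRing (cornerNonUnitalSubring e)) with
    one := ⟨e, 1, (mul_one e).symm⟩
    one_mul := fun x => Subtype.ext (show e * (x : R) = x by
      obtain ⟨r, hr⟩ : ∃ r : R, (x : R) = e * r := x.2
      rw [hr, ← mul_assoc, he])
    mul_one := fun x => Subtype.ext (show (x : R) * e = x by
      obtain ⟨r, hr⟩ : ∃ r : R, (x : R) = e * r := x.2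
      rw [← hc, hr, ← mul_assoc, he]) }

/-!
The corner projection `r ↦ e r` is a surjective ring homomorphism `R → eR`. If `f g = 0` in
`eR[x]`, lift `f, g` to `F, G ∈ R[x]`; then `(e F) G = 0`, and strong nilpotence of
`(e Fᵢ)(e Gⱼ)` in `R` passes down to `eR` along the injective inclusion. Conversely, the
projections onto `eR` and `(1 - e)R` have trivial joint kernel and send a test sequence
`sₙ₊₁ = sₙ rₙ sₙ` for `a ∈ R` to test sequences in the corners; once `sₙ` lies in a two-sided
ideal it stays there, so both components of `sₙ`, hence `sₙ` itself, eventually vanish.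
-/

section StronglyNilpotent

variable {R S F : Type*} [Ring R] [Ring S] [FunLike F R S] [NonUnitalRingHomClass F R S]

theorem IsStronglyNilpotent.exists_map_eq_zero (φ : F) {a : R} (ha : IsStronglyNilpotent (φ a))
    {s : ℕ → R} (hs0 : s 0 = a) (hstep : ∀ n, ∃ r, s (n + 1) = s n * r * s n) :
    ∃ n, φ (s n) = 0 :=
  ha (φ ∘ s) (congrArg φ hs0) fun n => by
    obtain ⟨r, hr⟩ := hstep n
    exact ⟨φ r, by simp only [Function.comp_apply, hr, map_mul]⟩

theorem IsStronglyNilpotent.of_injective_s10 (φ : F) (hφ : Function.Injective φ) {a : R}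
    (ha : IsStronglyNilpotent (φ a)) : IsStronglyNilpotent a := fun s hs0 hstep => by
  obtain ⟨n, hn⟩ := ha.exists_map_eq_zero φ hs0 hstep
  exact ⟨n, hφ (by rw [hn, map_zero])⟩

theorem IsStronglyNilpotent.eventually_map_eq_zero (φ : F) {a : R}
    (ha : IsStronglyNilpotent (φ a)) {s : ℕ → R} (hs0 : s 0 = a)
    (hstep : ∀ n, ∃ r, s (n + 1) = s n * r * s n) : ∃ N, ∀ n ≥ N, φ (s n) = 0 := by
  obtain ⟨N, hN⟩ := ha.exists_map_eq_zero φ hs0 hstep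
  refine ⟨N, fun n hn => Nat.le_induction hN (fun m _ ih => ?_) n hn⟩
  obtain ⟨r, hr⟩ := hstep m
  rw [hr, map_mul, map_mul, ih, zero_mul, zero_mul]

theorem IsStronglyNilpotent.of_map_of_map {S' F' : Type*} [Ring S'] [FunLike F' R S']
    [NonUnitalRingHomClass F' R S'] (φ : F) (ψ : F') (hker : ∀ x, φ x = 0 → ψ x = 0 → x = 0)
    {a : R} (hφ : IsStronglyNilpotent (φ a)) (hψ : IsStronglyNilpotent (ψ a)) :
    IsStronglyNilpotent a := fun s hs0 hstep => by
  obtain ⟨M, hM⟩ := hφ.eventually_map_eq_zero φ hs0 hstep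
  obtain ⟨N, hN⟩ := hψ.eventually_map_eq_zero ψ hs0 hstep
  exact ⟨max M N, hker _ (hM _ (le_max_left M N)) (hN _ (le_max_right M N))⟩

end StronglyNilpotent

section AlmostArmendariz

variable {R S : Type*} [Ring R] [Ring S]

theorem IsAlmostArmendariz.map_coeff_mul_mem (hS : IsAlmostArmendariz S) (φ : R →+* S)
    {f g : Polynomial R} (hfg : f * g = 0) (i j : ℕ) :
    φ (f.coeff i * g.coeff j) ∈ primeRadical S := by
  have hmap : f.map φ * g.map φ = 0 := by rw [← Polynomial.map_mul, hfg, Polynomial.map_zero]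
  simpa only [Polynomial.coeff_map, map_mul] using hS _ _ hmap i j

theorem IsAlmostArmendariz.of_map_of_map {S' : Type*} [Ring S'] (φ : R →+* S) (ψ : R →+* S')
    (hker : ∀ x, φ x = 0 → ψ x = 0 → x = 0) (hS : IsAlmostArmendariz S)
    (hS' : IsAlmostArmendariz S') : IsAlmostArmendariz R := fun _ _ hfg i j =>
  IsStronglyNilpotent.of_map_of_map φ ψ hker (hS.map_coeff_mul_mem φ hfg i j)
    (hS'.map_coeff_mul_mem ψ hfg i j)

end AlmostArmendariz

section Corner

variable {R : Type*} [Ring R] {e : R}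

theorem mul_mul_eq_mul_mul_mul_of_central_idempotent (he : e * e = e)
    (hc : ∀ r : R, e * r = r * e) (r s : R) : e * (r * s) = e * r * (e * s) := by
  rw [← mul_assoc (e * r) e s, mul_assoc e r e, ← hc r, ← mul_assoc e e r, he, mul_assoc]

def cornerHom (e : R) (he : e * e = e) (hc : ∀ r : R, e * r = r * e) :
    letI := cornerRing e he hc
    R →+* cornerNonUnitalSubring e :=
  letI := cornerRing e he hc
  { toFun := fun r => ⟨e * r, r, rfl⟩
    map_one' := Subtype.ext (mul_one e)
    map_mul' := fun r s => Subtype.ext (mul_mul_eq_mul_mul_mul_of_central_idempotent he hc r s)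
    map_zero' := Subtype.ext (mul_zero e)
    map_add' := fun r s => Subtype.ext (mul_add e r s) }

theorem cornerHom_surjective (he : e * e = e) (hc : ∀ r : R, e * r = r * e) :
    Function.Surjective (cornerHom e he hc) := fun x => by
  obtain ⟨r, hr⟩ := x.2
  exact ⟨r, Subtype.ext hr.symm⟩

theorem eq_zero_of_cornerHom_eq_zero (he : e * e = e) (hc : ∀ r : R, e * r = r * e)
    (he' : (1 - e) * (1 - e) = 1 - e) (hc' : ∀ r : R, (1 - e) * r = r * (1 - e)) (x : R)
    (h : cornerHom e he hc x = 0) (h' : cornerHom (1 - e) he' hc' x = 0) : x = 0 := by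
  have h₀ : e * x = 0 := congrArg Subtype.val h
  have h₁ : (1 - e) * x = 0 := congrArg Subtype.val h'
  rw [← one_mul x, ← add_sub_cancel e 1, add_mul, h₀, h₁, add_zero]

theorem IsAlmostArmendariz.corner (he : e * e = e) (hc : ∀ r : R, e * r = r * e)
    (hR : IsAlmostArmendariz R) :
    letI := cornerRing e he hc
    IsAlmostArmendariz (cornerNonUnitalSubring e) := by
  let _ := cornerRing e he hc
  intro f g hfg i j
  obtain ⟨F, rfl⟩ := Polynomial.map_surjective _ (cornerHom_surjective he hc) f
  obtain ⟨G, rfl⟩ := Polynomial.map_surjective _ (cornerHom_surjective he hc) g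
  rw [← Polynomial.map_mul] at hfg
  have hlift : Polynomial.C e * F * G = 0 := by
    ext k
    rw [mul_assoc, Polynomial.coeff_C_mul, Polynomial.coeff_zero]
    have hk := congrArg (fun p => (p.coeff k : R)) hfg
    rw [Polynomial.coeff_map] at hk
    exact hk
  refine IsStronglyNilpotent.of_injective_s10 (NonUnitalSubringClass.subtype _) Subtype.val_injective ?_
  have hmem := hR _ _ hlift i j
  rw [Polynomial.coeff_C_mul, mul_assoc, mul_mul_eq_mul_mul_mul_of_central_idempotent he hc]
    at hmem
  rw [Polynomial.coeff_map, Polynomial.coeff_map]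
  exact hmem

end Corner

/-- Let `e` be a central idempotent of `R`.  Then `R` is almost Armendariz if and only if both
corner rings `eR` and `(1 - e)R` are almost Armendariz. -/
theorem almostArmendariz_iff_corners {R : Type*} [Ring R] (e : R)
    (he : e * e = e) (hc : ∀ r : R, e * r = r * e) :
    letI : Ring (cornerNonUnitalSubring e) := cornerRing e he hc
    letI : Ring (cornerNonUnitalSubring (1 - e)) :=
      cornerRing (1 - e)
        (by
          have h1 : (1 - e) * e = 0 := by rw [sub_mul, one_mul, he, sub_self]
          rw [mul_sub, mul_one, h1, sub_zero])
        (fun r => by rw [sub_mul, one_mul, mul_sub, mul_one, hc r])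
    (IsAlmostArmendariz R ↔
      (IsAlmostArmendariz (cornerNonUnitalSubring e) ∧
        IsAlmostArmendariz (cornerNonUnitalSubring (1 - e)))) := by
  have he2 : (1 - e) * (1 - e) = 1 - e := IsIdempotentElem.one_sub he
  have hc2 (r : R) : (1 - e) * r = r * (1 - e) := (Commute.one_left r).sub_left (hc r)
  let _ := cornerRing e he hc
  let _ := cornerRing (1 - e) he2 hc2
  exact ⟨fun hR => ⟨hR.corner he hc, hR.corner he2 hc2⟩, fun ⟨h₁, h₂⟩ =>
    IsAlmostArmendariz.of_map_of_map (cornerHom e he hc) (cornerHom (1 - e) he2 hc2)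
      (eq_zero_of_cornerHom_eq_zero he hc he2 hc2) h₁ h₂⟩
end

section
/- Let R be a ring and I a nilpotent two-sided ideal of R. If the quotient ring R/I is almost Armendariz, then R is almost Armendariz. -/
/-!
Map `f g = 0` to `(R/I)[x]`: each product `a = aᵢ bⱼ` becomes strongly nilpotent modulo `I`.
Given a chain `s₀ = a`, `sₙ₊₁ = sₙ rₙ sₙ` in `R`, its image in `R/I` dies, so some `s_N ∈ I`.
From then on `s_{N+m+1} = s_{N+m} · (r_{N+m} s_{N+m})` with the second factor in `I`, so
`s_{N+m}` is a product of `m + 1` elements of `I`, which vanishes once `m + 1 ≥ k`.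
-/

section

variable {R S : Type*} [Ring R] [Ring S]

namespace TwoSidedIdeal

lemma list_prod_eq_zero_of_length_le {I : TwoSidedIdeal R} {k : ℕ}
    (hk : ∀ l : List R, l.length = k → (∀ x ∈ l, x ∈ I) → l.prod = 0)
    {l : List R} (hlen : k ≤ l.length) (hl : ∀ x ∈ l, x ∈ I) : l.prod = 0 := by
  rw [← List.take_append_drop k l, List.prod_append,
    hk (l.take k) (List.length_take_of_le hlen) (fun x hx => hl x (List.mem_of_mem_take hx)),
    zero_mul]

section Chain

variable {I : TwoSidedIdeal R} {s : ℕ → R} (hs : ∀ n, ∃ r, s (n + 1) = s n * r * s n)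
  {N : ℕ} (hN : s N ∈ I)
include hs hN

lemma chain_add_mem (m : ℕ) : s (N + m) ∈ I := by
  induction m with
  | zero => exact hN
  | succ m ih =>
    obtain ⟨r, hr⟩ := hs (N + m)
    rw [← add_assoc, hr]
    exact I.mul_mem_left _ _ ih

lemma exists_list_prod_eq_chain_add (m : ℕ) :
    ∃ l : List R, l.length = m + 1 ∧ (∀ x ∈ l, x ∈ I) ∧ s (N + m) = l.prod := by
  induction m with
  | zero => exact ⟨[s N], rfl, by simpa using hN, by simp⟩
  | succ m ih =>
    obtain ⟨l, hlen, hl, hprod⟩ := ih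
    obtain ⟨r, hr⟩ := hs (N + m)
    refine ⟨l ++ [r * s (N + m)], by simp [hlen], ?_, ?_⟩
    · simpa [or_imp, forall_and] using
        ⟨hl, I.mul_mem_left _ _ (chain_add_mem hs hN m)⟩
    · rw [← add_assoc, hr, List.prod_append, ← hprod]
      simp [mul_assoc]

end Chain

end TwoSidedIdeal

open TwoSidedIdeal in
lemma IsStronglyNilpotent.of_map_s11 (f : R →+* S) {k : ℕ}
    (hk : ∀ l : List R, l.length = k → (∀ x ∈ l, x ∈ ker f) → l.prod = 0)
    {a : R} (ha : IsStronglyNilpotent (f a)) : IsStronglyNilpotent a := by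
  intro s hs0 hs
  obtain ⟨N, hN⟩ := ha (fun n => f (s n)) (by rw [hs0]) fun n => by
    obtain ⟨r, hr⟩ := hs n
    exact ⟨f r, by simp [hr]⟩
  obtain ⟨l, hlen, hl, hprod⟩ := exists_list_prod_eq_chain_add hs ((mem_ker f).2 hN) k
  exact ⟨N + k, hprod ▸ list_prod_eq_zero_of_length_le hk (by omega) hl⟩

lemma IsAlmostArmendariz.of_ringHom_s11 (f : R →+* S)
    (hf : ∀ a, f a ∈ primeRadical S → a ∈ primeRadical R) (hS : IsAlmostArmendariz S) :
    IsAlmostArmendariz R := by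
  intro p q hpq i j
  apply hf
  simpa only [Polynomial.coeff_map, map_mul] using
    hS (p.map f) (q.map f) (by rw [← Polynomial.map_mul, hpq, Polynomial.map_zero]) i j

end

/-- Let `I` be a nilpotent two-sided ideal of `R` (there is `k ≥ 1` with `Iᵏ = 0`, i.e. every
product of `k` elements of `I` vanishes).  If the quotient ring `R/I` is almost Armendariz,
then `R` is almost Armendariz. -/
theorem almostArmendariz_of_quotient_of_nilpotent_ideal {R : Type*} [Ring R]
    (I : TwoSidedIdeal R)
    (hnil : ∃ k : ℕ, 0 < k ∧ ∀ l : List R, l.length = k → (∀ x ∈ l, x ∈ I) → l.prod = 0)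
    (h : IsAlmostArmendariz I.ringCon.Quotient) : IsAlmostArmendariz R := by
  obtain ⟨k, -, hk⟩ := hnil
  have hker : ∀ l : List R, l.length = k → (∀ x ∈ l, x ∈ TwoSidedIdeal.ker I.ringCon.mk') →
      l.prod = 0 := by
    rwa [TwoSidedIdeal.ker_ringCon_mk']
  exact IsAlmostArmendariz.of_ringHom_s11 I.ringCon.mk'
    (fun _ ha => IsStronglyNilpotent.of_map_s11 I.ringCon.mk' hker ha) h
end

section
/- A ring R is almost Armendariz if and only if the polynomial ring R[x] is almost Armendariz. -/
/-! Strongly nilpotent elements are exactly those lying in every prime two-sided ideal: an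
ideal maximal among those missing a sequence `sₙ₊₁ ∈ sₙ R sₙ` is prime. Hence `P(R)` is an
ideal, and since primes of `R[X]` contract along `C` to primes of `R`, a polynomial with all
coefficients in `P(R)` lies in `P(R[X])`.

If `F G = 0` for `F = ∑ Fᵢ Yⁱ` and `G = ∑ Gⱼ Yʲ` in `R[X][Y]`, substitute `Y ↦ X ^ k` with `k`
larger than all the degrees of the `Fᵢ` and `Gⱼ`: their coefficients then sit in disjoint blocks
of coefficients of the images, so the almost Armendariz property of `R` puts every product of a
coefficient of `Fᵢ` with one of `Gⱼ` in `P(R)`, hence all coefficients of `Fᵢ Gⱼ`.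
Conversely `C : R → R[X]` is injective, and `C a` strongly nilpotent forces `a` strongly
nilpotent. -/

open Polynomial

namespace TwoSidedIdeal

variable {R : Type*} [Ring R]

structure IsPrime (P : TwoSidedIdeal R) : Prop where
  ne_top : P ≠ ⊤
  mem_or_mem : ∀ {a b : R}, (∀ r, a * r * b ∈ P) → a ∈ P ∨ b ∈ P

lemma mem_sSup_of_isChain {c : Set (TwoSidedIdeal R)} (hne : c.Nonempty)
    (hc : IsChain (· ≤ ·) c) {x : R} : x ∈ sSup c ↔ ∃ I ∈ c, x ∈ I := by
  refine ⟨fun hx => ?_, fun ⟨I, hI, hx⟩ => le_sSup hI hx⟩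
  let J : TwoSidedIdeal R := .mk' {x | ∃ I ∈ c, x ∈ I}
    (hne.imp fun I hI => ⟨hI, I.zero_mem⟩)
    (fun ⟨I, hI, hx⟩ ⟨I', hI', hy⟩ => (hc.total hI hI').elim
      (fun h => ⟨I', hI', I'.add_mem (h hx) hy⟩) (fun h => ⟨I, hI, I.add_mem hx (h hy)⟩))
    (fun ⟨I, hI, hx⟩ => ⟨I, hI, I.neg_mem hx⟩)
    (fun ⟨I, hI, hy⟩ => ⟨I, hI, I.mul_mem_left _ _ hy⟩)
    (fun ⟨I, hI, hx⟩ => ⟨I, hI, I.mul_mem_right _ _ hx⟩)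
  have hcJ : sSup c ≤ J := sSup_le fun I hI x hx => by
    simp only [J, mem_mk']
    exact ⟨I, hI, hx⟩
  simpa [J] using hcJ hx

lemma mul_mul_mem_of_mem_span {P : TwoSidedIdeal R} {a b : R} (h : ∀ r, a * r * b ∈ P)
    {u v : R} (hu : u ∈ span {a}) (hv : v ∈ span {b}) (r : R) : u * r * v ∈ P := by
  induction hu using span_induction generalizing r with
  | mem x hx =>
    rw [Set.mem_singleton_iff.1 hx]
    induction hv using span_induction generalizing r with
    | mem y hy => rw [Set.mem_singleton_iff.1 hy]; exact h r
    | zero => simp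
    | add y z _ _ hy hz => rw [mul_add]; exact P.add_mem (hy r) (hz r)
    | neg y _ hy => rw [mul_neg]; exact P.neg_mem (hy r)
    | left_absorb c y _ hy => simpa only [mul_assoc] using hy (r * c)
    | right_absorb c y _ hy => rw [← mul_assoc]; exact P.mul_mem_right _ _ (hy r)
  | zero => simp
  | add x y _ _ hx hy => rw [add_mul, add_mul]; exact P.add_mem (hx r) (hy r)
  | neg x _ hx => rw [neg_mul, neg_mul]; exact P.neg_mem (hx r)
  | left_absorb c x _ hx =>
    rw [mul_assoc, mul_assoc]
    exact P.mul_mem_left _ _ (by simpa only [mul_assoc] using hx r)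
  | right_absorb c x _ hx => simpa only [mul_assoc] using hx (c * r)

lemma mul_mul_mem_of_mem_sup_span {P : TwoSidedIdeal R} {a b : R} (h : ∀ r, a * r * b ∈ P)
    {u v : R} (hu : u ∈ P ⊔ span {a}) (hv : v ∈ P ⊔ span {b}) (r : R) :
    u * r * v ∈ P := by
  obtain ⟨p, hp, x, hx, rfl⟩ := mem_sup.1 hu
  obtain ⟨q, hq, y, hy, rfl⟩ := mem_sup.1 hv
  rw [show (p + x) * r * (q + y) = p * (r * (q + y)) + x * r * q + x * r * y by noncomm_ring]
  exact P.add_mem (P.add_mem (P.mul_mem_right _ _ hp) (P.mul_mem_left _ _ hq))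
    (mul_mul_mem_of_mem_span h hx hy r)

end TwoSidedIdeal

section StronglyNilpotent

open TwoSidedIdeal

variable {R : Type*} [Ring R]

lemma seq_mem_of_le {I : TwoSidedIdeal R} {s : ℕ → R}
    (hs : ∀ n, ∃ r, s (n + 1) = s n * r * s n) {m n : ℕ} (hmn : m ≤ n) (hm : s m ∈ I) :
    s n ∈ I := by
  induction n, hmn using Nat.le_induction with
  | base => exact hm
  | succ n _ ih =>
    obtain ⟨r, hr⟩ := hs n
    exact hr ▸ I.mul_mem_right _ _ (I.mul_mem_right _ _ ih)

lemma isPrime_of_maximal_forall_notMem {s : ℕ → R}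
    (hs : ∀ n, ∃ r, s (n + 1) = s n * r * s n)
    {M : TwoSidedIdeal R} (hM : Maximal (fun I : TwoSidedIdeal R => ∀ n, s n ∉ I) M) :
    M.IsPrime where
  ne_top h := hM.1 0 (h ▸ trivial)
  mem_or_mem {a b} hab := by
    by_contra! hab'
    have meets : ∀ c ∉ M, ∃ n, s n ∈ M ⊔ span {c} := fun c hc => by
      by_contra! h
      exact hc (hM.2 h le_sup_left (mem_sup_right (subset_span rfl)))
    obtain ⟨m, hm⟩ := meets a hab'.1
    obtain ⟨n, hn⟩ := meets b hab'.2
    obtain ⟨r, hr⟩ := hs (max m n)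
    exact hM.1 (max m n + 1) (hr ▸ mul_mul_mem_of_mem_sup_span hab
      (seq_mem_of_le hs (le_max_left m n) hm) (seq_mem_of_le hs (le_max_right m n) hn) r)

lemma exists_isPrime_notMem {a : R} (ha : ¬IsStronglyNilpotent a) :
    ∃ P : TwoSidedIdeal R, P.IsPrime ∧ a ∉ P := by
  simp only [IsStronglyNilpotent, not_forall, not_exists] at ha
  obtain ⟨s, rfl, hs, hne⟩ := ha
  set avoiding := {I : TwoSidedIdeal R | ∀ n, s n ∉ I}
  have chain_bound : ∀ c ⊆ avoiding, IsChain (· ≤ ·) c →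
      ∀ I ∈ c, ∃ J ∈ avoiding, ∀ I' ∈ c, I' ≤ J :=
    fun c hcS hc I hI => ⟨sSup c, fun n hn => by
      obtain ⟨J, hJ, hnJ⟩ := (mem_sSup_of_isChain ⟨I, hI⟩ hc).1 hn
      exact hcS hJ n hnJ, fun _ => le_sSup⟩
  obtain ⟨M, -, hM⟩ :=
    zorn_le_nonempty₀ _ chain_bound ⊥ fun n hn => hne n ((mem_bot _).1 hn)
  exact ⟨M, isPrime_of_maximal_forall_notMem hs hM, hM.1 0⟩

lemma IsStronglyNilpotent.mem_of_isPrime {a : R} (ha : IsStronglyNilpotent a)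
    {P : TwoSidedIdeal R} (hP : P.IsPrime) : a ∈ P := by
  by_contra haP
  have step : ∀ x : {x : R // x ∉ P}, ∃ r, x.1 * r * x.1 ∉ P := fun x => by
    by_contra! h
    exact x.2 ((hP.mem_or_mem h).elim id id)
  choose r hr using step
  let t : ℕ → {x : R // x ∉ P} := fun n =>
    Nat.rec ⟨a, haP⟩ (fun _ x => ⟨x.1 * r x * x.1, hr x⟩) n
  obtain ⟨n, hn⟩ := ha (fun n => (t n).1) rfl (fun n => ⟨r (t n), rfl⟩)
  exact (t n).2 (hn ▸ P.zero_mem)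

theorem mem_primeRadical_iff_forall_isPrime {a : R} :
    a ∈ primeRadical R ↔ ∀ P : TwoSidedIdeal R, P.IsPrime → a ∈ P := by
  refine ⟨fun ha P hP => IsStronglyNilpotent.mem_of_isPrime ha hP, fun h => ?_⟩
  by_contra ha
  obtain ⟨P, hP, haP⟩ := exists_isPrime_notMem ha
  exact haP (h P hP)

lemma IsStronglyNilpotent.of_map_s12 {S : Type*} [Ring S] {f : R →+* S} (hf : Function.Injective f)
    {a : R} (ha : IsStronglyNilpotent (f a)) : IsStronglyNilpotent a := by
  intro s hs0 hs
  obtain ⟨n, hn⟩ := ha (f ∘ s) (congrArg f hs0) fun n => by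
    obtain ⟨r, hr⟩ := hs n
    exact ⟨f r, by simp [hr]⟩
  exact ⟨n, hf (by simpa using hn)⟩

end StronglyNilpotent

namespace TwoSidedIdeal

variable (R : Type*) [Ring R]

def primeRadical : TwoSidedIdeal R := sInf {P | P.IsPrime}

variable {R}

lemma mem_primeRadical {a : R} : a ∈ primeRadical R ↔ a ∈ _root_.primeRadical R := by
  rw [mem_primeRadical_iff_forall_isPrime, primeRadical, mem_sInf]
  rfl

end TwoSidedIdeal

namespace Polynomial

variable {R : Type*} [Ring R]

lemma coeff_mul_mem {S : Type*} [SetLike S R] [AddSubmonoidClass S R] {I : S} {p q : R[X]}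
    (h : ∀ s t, p.coeff s * q.coeff t ∈ I) (n : ℕ) : (p * q).coeff n ∈ I := by
  rw [coeff_mul]
  exact sum_mem fun x _ => h x.1 x.2

lemma mem_of_forall_C_coeff_mem {Q : TwoSidedIdeal R[X]} {f : R[X]}
    (h : ∀ n, C (f.coeff n) ∈ Q) : f ∈ Q := by
  rw [f.as_sum_support_C_mul_X_pow]
  exact sum_mem fun n _ => Q.mul_mem_right _ _ (h n)

lemma isPrime_comap_C {Q : TwoSidedIdeal R[X]} (hQ : Q.IsPrime) : (Q.comap C).IsPrime where
  ne_top h := hQ.ne_top <| (Q.one_mem_iff).1 <| by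
    simpa using (TwoSidedIdeal.mem_comap C).1 ((TwoSidedIdeal.one_mem_iff _).2 h)
  mem_or_mem {a b} hab := by
    simp only [TwoSidedIdeal.mem_comap C] at hab ⊢
    refine hQ.mem_or_mem fun p => mem_of_forall_C_coeff_mem fun n => ?_
    rw [coeff_mul_C, coeff_C_mul]
    exact hab (p.coeff n)

lemma mem_primeRadical_of_forall_coeff_mem {f : R[X]} (hf : ∀ n, f.coeff n ∈ primeRadical R) :
    f ∈ primeRadical R[X] :=
  mem_primeRadical_iff_forall_isPrime.2 fun _ hQ => mem_of_forall_C_coeff_mem fun n =>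
    (TwoSidedIdeal.mem_comap C).1
      (mem_primeRadical_iff_forall_isPrime.1 (hf n) _ (isPrime_comap_C hQ))

lemma exists_natDegree_coeff_lt (P : R[X][X]) : ∃ k, ∀ n, (P.coeff n).natDegree < k :=
  ⟨P.support.sup (fun n => (P.coeff n).natDegree) + 1, fun n => by
    by_cases hn : n ∈ P.support
    · exact Nat.lt_succ_of_le (Finset.le_sup (f := fun n => (P.coeff n).natDegree) hn)
    · simp [notMem_support_iff.1 hn]⟩

noncomputable def kroneckerSubst (k : ℕ) : R[X][X] →+* R[X] :=
  eval₂RingHom' (RingHom.id _) (X ^ k) fun p => (commute_X p).symm.pow_right k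

lemma kroneckerSubst_apply (k : ℕ) (P : R[X][X]) :
    kroneckerSubst k P = ∑ n ∈ P.support, P.coeff n * X ^ (k * n) := by
  simp [kroneckerSubst, eval₂_eq_sum, Polynomial.sum_def, pow_mul]

lemma coeff_kroneckerSubst {k : ℕ} {P : R[X][X]} (hP : ∀ n, (P.coeff n).natDegree < k)
    (i : ℕ) {s : ℕ} (hs : s < k) :
    (kroneckerSubst k P).coeff (k * i + s) = (P.coeff i).coeff s := by
  rw [kroneckerSubst_apply, finsetSum_coeff, Finset.sum_eq_single i]
  · rw [coeff_mul_X_pow', if_pos (by omega), Nat.add_sub_cancel_left]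
  · intro n _ hni
    rw [coeff_mul_X_pow']
    split_ifs with hn
    · have hlt : n < i := by
        by_contra! h
        have hkin : k * (i + 1) ≤ k * n := Nat.mul_le_mul_left k (h.lt_of_ne (Ne.symm hni))
        rw [Nat.mul_succ] at hkin
        omega
      have hkni : k * (n + 1) ≤ k * i := Nat.mul_le_mul_left k hlt
      rw [Nat.mul_succ] at hkni
      exact coeff_eq_zero_of_natDegree_lt ((hP n).trans_le (by omega))
    · rfl
  · intro hi
    rw [notMem_support_iff.1 hi, zero_mul, coeff_zero]

end Polynomial

namespace IsAlmostArmendariz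

variable {R : Type*} [Ring R]

theorem polynomial (h : IsAlmostArmendariz R) : IsAlmostArmendariz R[X] := by
  intro F G hFG i j
  obtain ⟨kF, hF⟩ := exists_natDegree_coeff_lt F
  obtain ⟨kG, hG⟩ := exists_natDegree_coeff_lt G
  set k := max kF kG
  replace hF n : (F.coeff n).natDegree < k := (hF n).trans_le (le_max_left _ _)
  replace hG n : (G.coeff n).natDegree < k := (hG n).trans_le (le_max_right _ _)
  have hsubst : kroneckerSubst k F * kroneckerSubst k G = 0 := by rw [← map_mul, hFG, map_zero]
  have hcoeff s t :
      (F.coeff i).coeff s * (G.coeff j).coeff t ∈ TwoSidedIdeal.primeRadical R := by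
    rcases lt_or_ge s k with hs | hs
    · rcases lt_or_ge t k with ht | ht
      · rw [← coeff_kroneckerSubst hF i hs, ← coeff_kroneckerSubst hG j ht,
          TwoSidedIdeal.mem_primeRadical]
        exact h _ _ hsubst _ _
      · rw [coeff_eq_zero_of_natDegree_lt ((hG j).trans_le ht), mul_zero]
        exact zero_mem _
    · rw [coeff_eq_zero_of_natDegree_lt ((hF i).trans_le hs), zero_mul]
      exact zero_mem _
  exact mem_primeRadical_of_forall_coeff_mem fun n =>
    TwoSidedIdeal.mem_primeRadical.1 (coeff_mul_mem hcoeff n)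

theorem of_polynomial (h : IsAlmostArmendariz R[X]) : IsAlmostArmendariz R := by
  intro f g hfg i j
  have hmap : f.map C * g.map C = 0 := by rw [← Polynomial.map_mul, hfg, Polynomial.map_zero]
  have hC := h _ _ hmap i j
  rw [coeff_map, coeff_map, ← map_mul] at hC
  exact IsStronglyNilpotent.of_map_s12 C_injective hC

end IsAlmostArmendariz

/-- A ring `R` is almost Armendariz if and only if the polynomial ring `R[x]` is almost
Armendariz. -/
theorem almostArmendariz_iff_polynomial {R : Type*} [Ring R] :
    IsAlmostArmendariz R ↔ IsAlmostArmendariz (Polynomial R) :=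
  ⟨IsAlmostArmendariz.polynomial, IsAlmostArmendariz.of_polynomial⟩
end

section
/- Let R be a ring and S a multiplicatively closed subset of R consisting of central regular (non-zero-divisor) elements, and let S⁻¹R = {u⁻¹a : u ∈ S, a ∈ R} be the corresponding localization of R. If R is almost Armendariz, then S⁻¹R is almost Armendariz. -/
namespace AAtest

open OreLocalization Polynomial

variable {R : Type*} [Ring R] {S : Submonoid R} [OreLocalization.OreSet S]

section

variable (hc : ∀ s ∈ S, ∀ r : R, s * r = r * s)
variable (hreg : ∀ s ∈ S, IsRegular (s : R))

include hc

theorem myMul (r₁ r₂ : R) (s₁ s₂ : S) :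
    (r₁ /ₒ s₁) * (r₂ /ₒ s₂) = (r₁ * r₂) /ₒ (s₁ * s₂) := by
  rw [oreDiv_mul_char r₁ r₂ s₁ s₂ r₁ s₂ (hc s₂ s₂.2 r₁)]
  congr 1
  exact Subtype.ext (hc s₂ s₂.2 s₁)

include hreg in
theorem myZeroIff (r : R) (s : S) : r /ₒ s = 0 ↔ r = 0 := by
  constructor
  · intro h
    rw [show (0 : OreLocalization S R) = (0 : R) /ₒ (1 : S) from (zero_oreDiv' 1).symm,
      oreDiv_eq_iff] at h
    obtain ⟨u, v, h1, h2⟩ := h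
    have h1' : v * r = 0 := by
      have := h1
      simp only [smul_eq_mul, Submonoid.smul_def, smul_zero] at this
      -- this : 0 = v * r ?
      exact this.symm
    have h2' : (u : R) = v * (s : R) := by simpa using h2
    have hur : (u : R) * r = 0 := by
      rw [h2', mul_assoc, hc s s.2 r, ← mul_assoc, h1', zero_mul]
    have := (hreg u u.2).left (by rw [hur, mul_zero] : (u : R) * r = (u : R) * 0)
    exact this
  · rintro rfl; exact zero_oreDiv' s

theorem myCentral (s : S) (x : OreLocalization S R) :
    ((s : R) /ₒ (1 : S)) * x = x * ((s : R) /ₒ (1 : S)) := by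
  induction x using OreLocalization.ind with
  | _ r t =>
    rw [myMul hc, myMul hc, hc s s.2 r]
    congr 1
    exact Subtype.ext (by simp only [Submonoid.coe_mul, Submonoid.coe_one, mul_one, one_mul])

theorem mySN {c : R} (hsn : IsStronglyNilpotent c) (s : S) :
    IsStronglyNilpotent (c /ₒ s) := by
  intro t h0 hstep
  choose r hr using hstep
  have hrep : ∀ n, ∃ p : R × S, r n = p.1 /ₒ p.2 := by
    intro n
    induction r n using OreLocalization.ind with
    | _ d v => exact ⟨(d, v), rfl⟩
  choose p hp using hrep
  let a : ℕ → R × S := fun n =>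
    Nat.rec (c, s) (fun n q => (q.1 * (p n).1 * q.1, q.2 * (p n).2 * q.2)) n
  have ha : ∀ n, t n = (a n).1 /ₒ (a n).2 := by
    intro n
    induction n with
    | zero => exact h0
    | succ n ih =>
      rw [hr n, ih, hp n, myMul hc, myMul hc]
  obtain ⟨n, hn⟩ := hsn (fun n => (a n).1) rfl (fun n => ⟨(p n).1, rfl⟩)
  exact ⟨n, by rw [ha n, hn, zero_oreDiv']⟩

include hreg in
/-- Clearing denominators -/
theorem myClear (N : ℕ) :
    ∀ f : Polynomial (OreLocalization S R), (∀ k, N < k → f.coeff k = 0) →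
    ∃ (u : S) (F : Polynomial R), ∀ k,
      (F.coeff k) /ₒ (1 : S) = ((u : R) /ₒ (1 : S)) * f.coeff k := by
  induction N with
  | zero =>
    intro f hf
    obtain ⟨⟨a, u⟩, hp⟩ : ∃ p : R × S, f.coeff 0 = p.1 /ₒ p.2 := by
      induction f.coeff 0 using OreLocalization.ind with
      | _ d v => exact ⟨(d, v), rfl⟩
    refine ⟨u, Polynomial.C a, fun k => ?_⟩
    rcases Nat.eq_zero_or_pos k with rfl | hk
    · rw [coeff_C_zero, hp, myMul hc]
      rw [OreLocalization.expand a 1 (u : R) (by simpa using u.2)]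
      simp only [smul_eq_mul]
      congr 1
      exact Subtype.ext (by simp only [Submonoid.coe_mul, Submonoid.coe_one, mul_one, one_mul])
    · rw [hf k hk, coeff_C, if_neg hk.ne', mul_zero, zero_oreDiv']
  | succ N ih =>
    intro f hf
    set g := f.erase (N + 1) with hg
    have hg' : ∀ k, N < k → g.coeff k = 0 := by
      intro k hk
      rcases eq_or_ne k (N + 1) with rfl | hne
      · simp [hg, Polynomial.coeff_erase]
      · rw [hg, Polynomial.coeff_erase, if_neg hne]
        exact hf k (by omega)
    obtain ⟨u, G, hG⟩ := ih g hg'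
    obtain ⟨⟨a, v⟩, hp⟩ : ∃ p : R × S, f.coeff (N + 1) = p.1 /ₒ p.2 := by
      induction f.coeff (N + 1) using OreLocalization.ind with
      | _ d w => exact ⟨(d, w), rfl⟩
    refine ⟨u * v, (v : R) • G + Polynomial.monomial (N + 1) ((u : R) * a), fun k => ?_⟩
    have hfg : ∀ k, k ≠ N + 1 → f.coeff k = g.coeff k := by
      intro k hk
      rw [hg, Polynomial.coeff_erase, if_neg hk]
    rcases eq_or_ne k (N + 1) with rfl | hne
    · -- coefficient at N+1
      have hGzero : G.coeff (N + 1) = 0 := by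
        have := hG (N + 1)
        rw [hg, Polynomial.coeff_erase, if_pos rfl, mul_zero] at this
        exact (myZeroIff hc hreg _ _).mp this
      rw [Polynomial.coeff_add, Polynomial.coeff_smul, Polynomial.coeff_monomial, if_pos rfl,
        hGzero, smul_zero, zero_add, hp, myMul hc]
      -- goal : (v * (u * a)) /ₒ 1 = ((u*v) * a) /ₒ (1 * v)
      rw [OreLocalization.expand ((u:R) * a) 1 (v : R) (by simpa using v.2)]
      simp only [smul_eq_mul]
      rw [show ((v:R) * ((u:R) * a)) = (((u * v : S) : R) * a) by
        rw [Submonoid.coe_mul, ← mul_assoc, hc v v.2 (u:R)]]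
      congr 1
      exact Subtype.ext (by simp only [Submonoid.coe_mul, Submonoid.coe_one, mul_one, one_mul])
    · rw [hfg k hne, Polynomial.coeff_add, Polynomial.coeff_smul, Polynomial.coeff_monomial,
        if_neg (fun h => hne h.symm), add_zero]
      have : ((u * v : S) : R) /ₒ (1 : S) = ((v : R) /ₒ (1:S)) * ((u : R) /ₒ (1:S)) := by
        rw [myMul hc, Submonoid.coe_mul, hc v v.2 (u:R)]
        congr 1
        exact Subtype.ext (by simp only [Submonoid.coe_mul, Submonoid.coe_one, mul_one, one_mul])
      rw [this, mul_assoc, ← hG k, myMul hc]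
      simp only [smul_eq_mul]
      congr 1
      exact Subtype.ext (by simp only [Submonoid.coe_mul, Submonoid.coe_one, mul_one, one_mul])

include hreg in
theorem myMain (hR : IsAlmostArmendariz R) : IsAlmostArmendariz (OreLocalization S R) := by
  intro f g hfg i j
  obtain ⟨u, F, hF⟩ := myClear hc hreg f.natDegree f
    (fun k hk => Polynomial.coeff_eq_zero_of_natDegree_lt hk)
  obtain ⟨v, G, hG⟩ := myClear hc hreg g.natDegree g
    (fun k hk => Polynomial.coeff_eq_zero_of_natDegree_lt hk)
  set φ : R →+* OreLocalization S R := numeratorRingHom with hφ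
  have hφ_apply : ∀ r : R, φ r = r /ₒ (1 : S) := fun r => rfl
  have hinj : Function.Injective φ := by
    intro r r' h
    have h0 : φ (r - r') = 0 := by rw [map_sub, h, sub_self]
    rw [hφ_apply] at h0
    exact sub_eq_zero.mp ((myZeroIff hc hreg _ _).mp h0)
  have e1 : F.map φ = Polynomial.C ((u : R) /ₒ (1:S)) * f := Polynomial.ext fun k => by
    rw [Polynomial.coeff_map, Polynomial.coeff_C_mul, hφ_apply, hF k]
  have e2 : G.map φ = Polynomial.C ((v : R) /ₒ (1:S)) * g := Polynomial.ext fun k => by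
    rw [Polynomial.coeff_map, Polynomial.coeff_C_mul, hφ_apply, hG k]
  have hcentC : ∀ (s : S) (h : Polynomial (OreLocalization S R)),
      Polynomial.C ((s : R) /ₒ (1:S)) * h = h * Polynomial.C ((s : R) /ₒ (1:S)) :=
    fun s h => Polynomial.ext fun k => by
      rw [Polynomial.coeff_C_mul, Polynomial.coeff_mul_C, myCentral hc]
  have hmap : (F * G).map φ = 0 := by
    calc (F * G).map φ = Polynomial.C ((u : R) /ₒ (1:S)) * f
        * (Polynomial.C ((v : R) /ₒ (1:S)) * g) := by rw [Polynomial.map_mul, e1, e2]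
      _ = Polynomial.C ((u : R) /ₒ (1:S)) * (Polynomial.C ((v : R) /ₒ (1:S)) * (f * g)) := by
          rw [mul_assoc, ← mul_assoc f, ← hcentC v f, mul_assoc]
      _ = 0 := by rw [hfg, mul_zero, mul_zero]
  have hFG0 : F * G = 0 :=
    Polynomial.map_injective φ hinj (by rw [hmap, Polynomial.map_zero])
  have hSN : IsStronglyNilpotent (F.coeff i * G.coeff j) := hR F G hFG0 i j
  have h1 : ((u * v : S) : R) /ₒ (1:S) = ((u : R) /ₒ (1:S)) * ((v : R) /ₒ (1:S)) := by
    rw [myMul hc]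
    congr 1
    exact Subtype.ext (by simp only [Submonoid.coe_mul, Submonoid.coe_one, one_mul])
  have lhs : (((u * v : S) : R) /ₒ (1:S)) * ((F.coeff i * G.coeff j) /ₒ (u * v))
      = (F.coeff i * G.coeff j) /ₒ (1:S) := by
    rw [myMul hc]
    rw [OreLocalization.expand (F.coeff i * G.coeff j) 1 ((u * v : S) : R)
      (by simpa using (u * v).2)]
    simp only [smul_eq_mul]
    congr 1
    exact Subtype.ext (by simp only [Submonoid.coe_mul, Submonoid.coe_one, mul_one, one_mul])
  have rhs : (((u * v : S) : R) /ₒ (1:S)) * (f.coeff i * g.coeff j)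
      = (F.coeff i * G.coeff j) /ₒ (1:S) := by
    rw [h1, mul_assoc, ← mul_assoc ((v : R) /ₒ (1:S)), myCentral hc v (f.coeff i),
      mul_assoc (f.coeff i), ← mul_assoc (((u : R)) /ₒ (1:S)), ← hF i, ← hG j, myMul hc, one_mul]
  have hu : IsUnit (((u * v : S) : R) /ₒ (1:S)) := by
    have := numerator_isUnit (u * v)
    rwa [numeratorHom_apply] at this
  have key : f.coeff i * g.coeff j = (F.coeff i * G.coeff j) /ₒ (u * v) :=
    hu.mul_left_cancel (rhs.trans lhs.symm)
  show IsStronglyNilpotent (f.coeff i * g.coeff j)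
  rw [key]
  exact mySN hc hSN (u * v)

end
end AAtest

/-- Let `S` be a multiplicatively closed subset of `R` consisting of central regular elements,
and let `S⁻¹R` be the corresponding (Ore) localization of `R` at `S`.  If `R` is almost
Armendariz, then `S⁻¹R` is almost Armendariz. -/
theorem almostArmendariz_localization {R : Type*} [Ring R] (S : Submonoid R)
    (hc : ∀ s ∈ S, ∀ r : R, s * r = r * s)
    (hreg : ∀ s ∈ S, IsRegular (s : R))
    (hR : IsAlmostArmendariz R) :
    letI : OreLocalization.OreSet S :=
      { ore_right_cancel := fun r₁ r₂ s h => ⟨1, by rw [(hreg s s.2).right h]⟩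
        oreNum := fun r _ => r
        oreDenom := fun _ s => s
        ore_eq := fun r s => hc s s.2 r }
    IsAlmostArmendariz (OreLocalization S R) := by
  letI inst : OreLocalization.OreSet S :=
    { ore_right_cancel := fun r₁ r₂ s h => ⟨1, by rw [(hreg s s.2).right h]⟩
      oreNum := fun r _ => r
      oreDenom := fun _ s => s
      ore_eq := fun r s => hc s s.2 r }
  exact AAtest.myMain hc hreg hR
end

section
/- If R is a semicommutative ring, then R is weak Armendariz if and only if R is almost Armendariz. -/
/-- A ring `R` is *weak Armendariz* if whenever `f, g ∈ R[x]` satisfy `f g = 0`, every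
product of a coefficient of `f` with a coefficient of `g` is nilpotent. -/
def IsWeakArmendariz (R : Type*) [Ring R] : Prop :=
  ∀ f g : Polynomial R, f * g = 0 → ∀ i j : ℕ, IsNilpotent (f.coeff i * g.coeff j)

def IsSemicommutative (R : Type*) [Ring R] : Prop :=
  ∀ a b : R, a * b = 0 → ∀ r : R, a * r * b = 0

section

variable {R : Type*} [Ring R]

def IsBelowPow (a : R) (j : ℕ) (x : R) : Prop :=
  ∀ z y : R, z * a ^ j * y = 0 → z * x * y = 0

lemma isBelowPow_one_self (a : R) : IsBelowPow a 1 a := by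
  simpa only [IsBelowPow, pow_one] using fun _ _ h => h

lemma IsBelowPow.mul_mul (hR : IsSemicommutative R) {a x x' : R} {j j' : ℕ}
    (hx : IsBelowPow a j x) (hx' : IsBelowPow a j' x') (r : R) :
    IsBelowPow a (j + j') (x * r * x') := by
  intro z y h
  have h₁ : z * x * (a ^ j' * y) = 0 :=
    hx z (a ^ j' * y) (by simpa only [pow_add, mul_assoc] using h)
  have h₂ : z * x * r * a ^ j' * y = 0 := by
    simpa only [mul_assoc] using hR _ _ h₁ r
  simpa only [mul_assoc] using hx' (z * x * r) y h₂

lemma IsBelowPow.eq_zero {a x : R} {j : ℕ} (hx : IsBelowPow a j x) (ha : a ^ j = 0) : x = 0 := by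
  simpa using hx 1 1 (by simp [ha])

lemma IsStronglyNilpotent.isNilpotent {a : R} (ha : IsStronglyNilpotent a) : IsNilpotent a := by
  obtain ⟨n, hn⟩ := ha (fun k => a ^ 2 ^ k) (by simp) fun k =>
    ⟨1, by rw [mul_one, ← pow_add, ← two_mul, ← pow_succ']⟩
  exact ⟨2 ^ n, hn⟩

lemma IsNilpotent.isStronglyNilpotent (hR : IsSemicommutative R) {a : R} (ha : IsNilpotent a) :
    IsStronglyNilpotent a := by
  obtain ⟨n, hn⟩ := ha
  intro s hs₀ hs
  have below : ∀ k, IsBelowPow a (2 ^ k) (s k) := by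
    intro k
    induction k with
    | zero => simpa [hs₀] using isBelowPow_one_self a
    | succ k ih =>
      obtain ⟨r, hr⟩ := hs k
      rw [hr, _root_.pow_succ, mul_two]
      exact ih.mul_mul hR ih r
  exact ⟨n, (below n).eq_zero (pow_eq_zero_of_le n.lt_two_pow_self.le hn)⟩

end

/-- If `R` is a semicommutative ring, then `R` is weak Armendariz if and only if `R` is
almost Armendariz. -/
theorem weakArmendariz_iff_almostArmendariz_of_semicommutative {R : Type*} [Ring R]
    (hsc : ∀ a b : R, a * b = 0 → ∀ r : R, a * r * b = 0) :
    IsWeakArmendariz R ↔ IsAlmostArmendariz R :=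
  ⟨fun hw f g hfg i j => (hw f g hfg i j).isStronglyNilpotent hsc,
    fun ha f g hfg i j => IsStronglyNilpotent.isNilpotent (ha f g hfg i j)⟩
end

section
/- Every subring of an almost Armendariz ring is almost Armendariz: if R is almost Armendariz and S is a subring of R (with the same identity), then S is almost Armendariz. -/
/-- Every subring of an almost Armendariz ring is almost Armendariz. -/
theorem subring_almostArmendariz {R : Type*} [Ring R] (hR : IsAlmostArmendariz R)
    (S : Subring R) : IsAlmostArmendariz S := by
  intro f g hfg i j
  have h0 : (f.map S.subtype) * (g.map S.subtype) = 0 := by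
    rw [← Polynomial.map_mul, hfg, Polynomial.map_zero]
  have hR' := hR _ _ h0 i j
  simp only [Polynomial.coeff_map] at hR'
  intro s hs0 hstep
  have := hR' (fun n => (s n : R)) (by simp [hs0]) (by
    intro n
    obtain ⟨r, hr⟩ := hstep n
    exact ⟨(r : R), by push_cast [hr]; ring⟩)
  obtain ⟨n, hn⟩ := this
  exact ⟨n, Subtype.ext hn⟩
end
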